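/- Fix $0<\alpha<1$, an integer $t\ge1$, and $\rho\in(0,1/2)$. Define $B_t(\rho,\alpha)=\rho\sum_{i=1}^t \frac{(1-2\rho)^{t-i}}{i^\alpha}$ and $L_\alpha(\theta)=\theta\int_0^1 e^{-2\theta u}(1-u)^{-\alpha}\,du$. Then $t^\alpha B_t(\rho,\alpha) \le L_\alpha\!\left(\frac{t}{2}(-\log(1-2\rho))\right)$. -/

import Mathlib

open Real MeasureTheory

set_option maxHeartbeats 1000000 in
/-- discrete-to-continuous comparison:
`t^α B_t(ρ,α) ≤ L_α(t/2 · (-log(1-2ρ)))`. -/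
theorem discrete_to_continuous (α : ℝ) (hα0 : 0 < α) (hα1 : α < 1)
    (t : ℕ) (ht : 1 ≤ t) (ρ : ℝ) (hρ0 : 0 < ρ) (hρ : ρ < 1 / 2) :
    (t : ℝ) ^ α *
        (ρ * ∑ i ∈ Finset.Icc 1 t, (1 - 2 * ρ) ^ (t - i) / (i : ℝ) ^ α) ≤
      (fun θ : ℝ => θ * ∫ u in (0 : ℝ)..1, Real.exp (-2 * θ * u) * (1 - u) ^ (-α))
        (((t : ℝ) / 2) * (-Real.log (1 - 2 * ρ))) := by
  have ht0 : (0:ℝ) < t := by exact_mod_cast ht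
  set β : ℝ := 1 - 2 * ρ with hβdef
  have hβ0 : 0 < β := by rw [hβdef]; linarith
  have hβ1 : β < 1 := by rw [hβdef]; linarith
  have hlogβ : Real.log β < 0 := Real.log_neg hβ0 hβ1
  set θ : ℝ := (t:ℝ)/2 * (-Real.log β) with hθdef
  have hθ0 : 0 < θ := by
    rw [hθdef]; apply mul_pos (by positivity); linarith
  set f : ℝ → ℝ := fun u => Real.exp (-2*θ*u) * (1-u) ^ (-α) with hfdef
  -- beta-reduce the goal
  show (t : ℝ) ^ α * (ρ * ∑ i ∈ Finset.Icc 1 t, β ^ (t - i) / (i : ℝ) ^ α)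
      ≤ θ * ∫ u in (0:ℝ)..1, f u
  -- exp values at grid points
  have hexp : ∀ j : ℕ, Real.exp (-2*θ*((j:ℝ)/t)) = β ^ j := by
    intro j
    have h1 : -2*θ*((j:ℝ)/t) = (j:ℝ) * Real.log β := by
      rw [hθdef]; field_simp
    rw [h1, Real.exp_nat_mul, Real.exp_log hβ0]
  -- integrability
  have hint : ∀ a b : ℝ, IntervalIntegrable f volume a b := by
    intro a b
    have h1 : IntervalIntegrable (fun u : ℝ => (1-u) ^ (-α)) volume a b := by
      have h2 := (intervalIntegral.intervalIntegrable_rpow' (a := 1-a) (b := 1-b) (r := -α)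
        (by linarith)).comp_sub_left 1
      simpa using h2
    exact h1.continuousOn_mul (Continuous.continuousOn (by fun_prop))
  -- exponential integral
  have hexpint : ∀ a b : ℝ, ∫ u in a..b, Real.exp (-2*θ*u)
      = (Real.exp (-2*θ*a) - Real.exp (-2*θ*b)) / (2*θ) := by
    intro a b
    have hd : ∀ x ∈ Set.uIcc a b,
        HasDerivAt (fun u => Real.exp (-2*θ*u) / (-(2*θ))) (Real.exp (-2*θ*x)) x := by
      intro x _
      have h1 : HasDerivAt (fun u : ℝ => -2*θ*u) (-2*θ) x := by
        simpa using (hasDerivAt_id x).const_mul (-2*θ)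
      have h2 := h1.exp.div_const (-(2*θ))
      refine h2.congr_deriv ?_
      have h2θ : θ ≠ 0 := hθ0.ne'
      field_simp
    rw [intervalIntegral.integral_eq_sub_of_hasDerivAt hd
      ((Continuous.intervalIntegrable (by fun_prop) a b))]
    field_simp
    ring
  -- split [0,1] into t pieces
  have hsplit : ∫ u in (0:ℝ)..1, f u
      = ∑ j ∈ Finset.range t, ∫ u in ((j:ℝ)/t)..(((j:ℝ)+1)/t), f u := by
    have h1 := intervalIntegral.sum_integral_adjacent_intervals
      (a := fun k : ℕ => (k:ℝ)/t) (n := t) (μ := volume) (f := f)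
      (fun k _ => hint _ _)
    simp only [Nat.cast_zero, zero_div, Nat.cast_add, Nat.cast_one,
      div_self ht0.ne'] at h1
    exact h1.symm
  -- per-interval lower bound
  have key : ∀ j ∈ Finset.range t,
      ρ/θ * (β ^ j * (((t:ℝ)-j)/t) ^ (-α)) ≤ ∫ u in ((j:ℝ)/t)..(((j:ℝ)+1)/t), f u := by
    intro j hj
    have hjt : j < t := Finset.mem_range.mp hj
    have hjt' : (j:ℝ) + 1 ≤ t := by exact_mod_cast Nat.succ_le_of_lt hjt
    have hab : (j:ℝ)/t ≤ ((j:ℝ)+1)/t := by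
      rw [div_le_div_iff₀ ht0 ht0]
      nlinarith
    have hcpos : 0 < ((t:ℝ)-j)/t := by
      apply div_pos (by linarith) ht0
    -- lower bound by constant * exp
    have hmono : ∫ u in ((j:ℝ)/t)..(((j:ℝ)+1)/t),
          (((t:ℝ)-j)/t) ^ (-α) * Real.exp (-2*θ*u)
        ≤ ∫ u in ((j:ℝ)/t)..(((j:ℝ)+1)/t), f u := by
      apply intervalIntegral.integral_mono_ae_restrict hab
        (Continuous.intervalIntegrable (by fun_prop) _ _) (hint _ _)
      have h1 : ∀ᵐ u ∂(volume.restrict (Set.Icc ((j:ℝ)/t) (((j:ℝ)+1)/t))), u ≠ (1:ℝ) := by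
        apply ae_restrict_of_ae
        have h0 : (volume : Measure ℝ) {(1:ℝ)} = 0 := Real.volume_singleton
        exact ae_iff.mpr (by simpa using h0)
      have h2 : ∀ᵐ u ∂(volume.restrict (Set.Icc ((j:ℝ)/t) (((j:ℝ)+1)/t))),
          u ∈ Set.Icc ((j:ℝ)/t) (((j:ℝ)+1)/t) := ae_restrict_mem measurableSet_Icc
      filter_upwards [h1, h2] with u hu1 hu2
      obtain ⟨hu2a, hu2b⟩ := hu2
      have hu1' : u < 1 := lt_of_le_of_ne (by
        calc u ≤ ((j:ℝ)+1)/t := hu2b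
        _ ≤ 1 := by rw [div_le_one ht0]; exact hjt') hu1
      have h1u : 0 < 1 - u := by linarith
      have hle : 1 - u ≤ ((t:ℝ)-j)/t := by
        rw [le_div_iff₀ ht0]
        have : (j:ℝ)/t ≤ u := hu2a
        rw [div_le_iff₀ ht0] at this
        nlinarith
      have := Real.rpow_le_rpow_of_nonpos h1u hle (by linarith : -α ≤ 0)
      calc (((t:ℝ)-j)/t) ^ (-α) * Real.exp (-2*θ*u)
          ≤ (1-u) ^ (-α) * Real.exp (-2*θ*u) := by
            apply mul_le_mul_of_nonneg_right this (Real.exp_nonneg _)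
        _ = f u := by rw [hfdef]; ring
    refine le_trans (le_of_eq ?_) hmono
    rw [intervalIntegral.integral_const_mul, hexpint, hexp j,
      show -2*θ*(((j:ℝ)+1)/t) = -2*θ*(((j+1:ℕ):ℝ)/t) by push_cast; ring, hexp (j+1)]
    have hβs : β ^ j - β ^ (j+1) = β ^ j * (2*ρ) := by
      rw [pow_succ, hβdef]; ring
    rw [hβs]
    field_simp
  -- combine
  have hsum : ρ * ∑ j ∈ Finset.range t, β ^ j * (((t:ℝ)-j)/t) ^ (-α)
      ≤ θ * ∫ u in (0:ℝ)..1, f u := by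
    rw [hsplit, Finset.mul_sum, Finset.mul_sum]
    apply Finset.sum_le_sum
    intro j hj
    have := mul_le_mul_of_nonneg_left (key j hj) (le_of_lt hθ0)
    calc ρ * (β ^ j * (((t:ℝ)-j)/t) ^ (-α))
        = θ * (ρ/θ * (β ^ j * (((t:ℝ)-j)/t) ^ (-α))) := by
          field_simp
      _ ≤ θ * ∫ u in ((j:ℝ)/t)..(((j:ℝ)+1)/t), f u := this
  refine le_trans (le_of_eq ?_) hsum
  -- reindex the sum
  have hre : ∑ j ∈ Finset.range t, β ^ j * (((t:ℝ)-j)/t) ^ (-α)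
      = ∑ j ∈ Finset.range t, β ^ (t-1-j) * (((j:ℝ)+1)/t) ^ (-α) := by
    rw [← Finset.sum_range_reflect]
    apply Finset.sum_congr rfl
    intro j hj
    have hj' : j < t := Finset.mem_range.mp hj
    have h1 : ((t - 1 - j : ℕ) : ℝ) = (t:ℝ) - (1 + j) := by
      rw [Nat.sub_sub, Nat.cast_sub (by omega)]
      push_cast; ring
    rw [h1, show (t:ℝ) - ((t:ℝ) - (1 + (j:ℝ))) = (j:ℝ) + 1 by ring]
  have hIcc : ∑ i ∈ Finset.Icc 1 t, β ^ (t-i) / (i:ℝ) ^ α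
      = ∑ j ∈ Finset.range t, β ^ (t-(1+j)) / ((1+j:ℕ):ℝ) ^ α := by
    rw [← Finset.Ico_add_one_right_eq_Icc, Finset.sum_Ico_eq_sum_range]
    simp
  have hterm : ∀ j ∈ Finset.range t,
      (t:ℝ) ^ α * (β ^ (t-(1+j)) / ((1+j:ℕ):ℝ) ^ α)
        = β ^ (t-1-j) * (((j:ℝ)+1)/t) ^ (-α) := by
    intro j hj
    have hj' : j < t := Finset.mem_range.mp hj
    have hcast : ((1+j:ℕ):ℝ) = (j:ℝ) + 1 := by push_cast; ring
    have hpow : t - (1+j) = t - 1 - j := by omega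
    rw [hpow, hcast, Real.rpow_neg (by positivity),
      Real.div_rpow (by positivity) (le_of_lt ht0), inv_div]
    ring
  rw [hIcc, hre,
    Finset.sum_congr rfl (fun j hj => (hterm j hj).symm), ← Finset.mul_sum]
  ring
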